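/- Let μ ∈ [0,1), and suppose a sequence (x_i) in ℝ satisfies x_i = 1 for all i. Let θ_T ∈ ℝ, and let a ∈ [0,1], v_in, v_out : ℕ → [-1/2, 1/2]. For j ≥ 1 define θ(j;a) = [Σ_{i=0}^{j-1} μ^{j-i-1}(1 + a v_in(i))(θ_T + a v_out(i))] / [Σ_{i=0}^{j-1} μ^{j-i-1}(1 + a v_in(i))²]. Then the denominator satisfies Σ_{i=0}^{j-1} μ^{j-i-1}(1 + a v_in(i))² ≥ 1/4, and |θ(j;a) - θ_T| ≤ 3(|θ_T|+1)(1-μ)⁻¹ · a. -/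

import Mathlib

open Finset

/-- bias bound for the scalar least-squares estimate with
errors-in-variables (Example 1 of the paper). -/
theorem stmt_4 (μ : ℝ) (hμ0 : 0 ≤ μ) (hμ1 : μ < 1)
    (θT : ℝ) (a : ℝ) (ha : a ∈ Set.Icc (0:ℝ) 1)
    (vin vout : ℕ → ℝ)
    (hvin : ∀ i, vin i ∈ Set.Icc (-(1/2) : ℝ) (1/2))
    (hvout : ∀ i, vout i ∈ Set.Icc (-(1/2) : ℝ) (1/2))
    (j : ℕ) (hj : 1 ≤ j) :
    ((1:ℝ)/4 ≤ ∑ i ∈ Finset.range j, μ ^ (j - i - 1) * (1 + a * vin i) ^ 2) ∧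
    |(∑ i ∈ Finset.range j, μ ^ (j - i - 1) * (1 + a * vin i) * (θT + a * vout i)) /
        (∑ i ∈ Finset.range j, μ ^ (j - i - 1) * (1 + a * vin i) ^ 2) - θT|
      ≤ 3 * (|θT| + 1) * (1 - μ)⁻¹ * a := by
  obtain ⟨ha0, ha1⟩ := ha
  set D := ∑ i ∈ Finset.range j, μ ^ (j - i - 1) * (1 + a * vin i) ^ 2 with hDdef
  set N := ∑ i ∈ Finset.range j, μ ^ (j - i - 1) * (1 + a * vin i) * (θT + a * vout i) with hNdef
  have hD : (1:ℝ)/4 ≤ D := by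
    have hterm : ∀ i ∈ Finset.range j, 0 ≤ μ ^ (j - i - 1) * (1 + a * vin i) ^ 2 := fun i _ =>
      mul_nonneg (pow_nonneg hμ0 _) (sq_nonneg _)
    have hmem : j - 1 ∈ Finset.range j := Finset.mem_range.mpr (by omega)
    have h1 : (1:ℝ)/4 ≤ μ ^ (j - (j-1) - 1) * (1 + a * vin (j-1)) ^ 2 := by
      have he : j - (j-1) - 1 = 0 := by omega
      rw [he, pow_zero, one_mul]
      have hv := hvin (j-1)
      have h2 : -(1/2:ℝ) ≤ a * vin (j-1) := by nlinarith [hv.1, hv.2]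
      nlinarith [h2]
    exact le_trans h1 (Finset.single_le_sum hterm hmem)
  refine ⟨hD, ?_⟩
  have hDpos : 0 < D := lt_of_lt_of_le (by norm_num) hD
  have hμpos : 0 < 1 - μ := by linarith
  have hgeom : ∑ i ∈ Finset.range j, μ ^ (j - i - 1) ≤ (1 - μ)⁻¹ := by
    have hr : ∑ i ∈ Finset.range j, μ ^ (j - i - 1) = ∑ i ∈ Finset.range j, μ ^ i := by
      rw [← Finset.sum_range_reflect]
      apply Finset.sum_congr rfl
      intro i hi
      have := Finset.mem_range.mp hi
      congr 1
      omega
    rw [hr, geom_sum_eq (by intro h; rw [h] at hμ1; exact lt_irrefl 1 hμ1),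
      div_le_iff_of_neg (by linarith : μ - 1 < 0)]
    have h0 : (0:ℝ) ≤ μ ^ j := pow_nonneg hμ0 j
    have hinv : (1 - μ)⁻¹ * (μ - 1) = -1 := by field_simp; ring
    linarith
  have key : |N - θT * D| ≤ (3/4) * (|θT| + 1) * a * ∑ i ∈ Finset.range j, μ ^ (j - i - 1) := by
    have hrw : N - θT * D = ∑ i ∈ Finset.range j,
        μ ^ (j - i - 1) * (1 + a * vin i) * (a * (vout i - θT * vin i)) := by
      rw [hNdef, hDdef, Finset.mul_sum, ← Finset.sum_sub_distrib]
      apply Finset.sum_congr rfl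
      intro i _
      ring
    rw [hrw, Finset.mul_sum]
    refine le_trans (Finset.abs_sum_le_sum_abs _ _) (Finset.sum_le_sum ?_)
    intro i _
    have hv := hvin i
    have hw := hvout i
    have habsθ := abs_nonneg θT
    have h1 : |(1 + a * vin i)| ≤ 3/2 := by
      rw [abs_le]; constructor <;> nlinarith [hv.1, hv.2]
    have h2 : |vout i - θT * vin i| ≤ (|θT| + 1) / 2 := by
      have := abs_le.mp (le_refl |θT|)
      rw [abs_le]
      have hθ1 : -|θT| ≤ θT := neg_abs_le θT
      have hθ2 : θT ≤ |θT| := le_abs_self θT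
      constructor <;> nlinarith [hv.1, hv.2, hw.1, hw.2, mul_le_mul_of_nonneg_left hv.2 habsθ, mul_le_mul_of_nonneg_left hv.1 habsθ]
    have hpow : (0:ℝ) ≤ μ ^ (j - i - 1) := pow_nonneg hμ0 _
    calc |μ ^ (j - i - 1) * (1 + a * vin i) * (a * (vout i - θT * vin i))|
        = μ ^ (j - i - 1) * |(1 + a * vin i)| * (a * |vout i - θT * vin i|) := by
          rw [abs_mul, abs_mul, abs_mul, abs_of_nonneg hpow, abs_of_nonneg ha0]
      _ ≤ μ ^ (j - i - 1) * (3/2) * (a * ((|θT| + 1) / 2)) := by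
          apply mul_le_mul
          · exact mul_le_mul_of_nonneg_left h1 hpow
          · exact mul_le_mul_of_nonneg_left h2 ha0
          · positivity
          · positivity
      _ = 3/4 * (|θT| + 1) * a * μ ^ (j - i - 1) := by ring
  have key2 : |N - θT * D| ≤ (3/4) * (|θT| + 1) * a * (1 - μ)⁻¹ := by
    refine le_trans key ?_
    apply mul_le_mul_of_nonneg_left hgeom
    positivity
  have hfrac : N / D - θT = (N - θT * D) / D := by field_simp
  rw [hfrac, abs_div, abs_of_pos hDpos, div_le_iff₀ hDpos]
  have hC : 0 ≤ (|θT| + 1) * (1 - μ)⁻¹ * a := by positivity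
  nlinarith [key2, hD, hC, abs_nonneg (N - θT * D)]
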